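/- arXiv:math/0608007 — 2 statements merged into one kernel-verified Lean document; each statement's English description precedes it below -/
import Mathlib

section
/- There exists a constant C depending only on the dimension d such that, for every spin configuration σ ∈ {−1,+1}^Λ and every coarse cell index k ∈ (ℤ/mℤ)^d, Σ_{l≠k} | Σ_{x∈C_k, y∈C_l} (J(x−y) − J̄(k,l)) σ(x)σ(y) | ≤ C (q^{d+1}/L) ‖∇V‖_∞, where J̄(k,l) = Q^{−2} Σ_{x∈C_k, y∈C_l} J(x−y). -/
open Finset

/-- Real spin value of a Boolean spin variable (`true ↦ +1`, `false ↦ −1`). -/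
def spin (b : Bool) : ℝ := if b then 1 else -1

/-- Integer spin value of a Boolean spin variable. -/
def spinZ (b : Bool) : ℤ := if b then 1 else -1

/-- The microscopic lattice site of the coarse cell `C_k` with offset `a`, i.e. the point
`q·k + a` of `Λ = (ℤ/nℤ)ᵈ` with `n = m·q`. -/
def cellPoint (d m q : ℕ) (k : Fin d → ZMod m) (a : Fin d → Fin q) :
    Fin d → ZMod (m * q) :=
  fun i => ((q * (k i).val + (a i).val : ℕ) : ZMod (m * q))

/-- The blocking map `F`: the coarse spin `η(k) = Σ_{x ∈ C_k} σ(x)`. -/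
def blockF (d m q : ℕ) (σ : (Fin d → ZMod (m * q)) → Bool)
    (k : Fin d → ZMod m) : ℤ :=
  ∑ a : Fin d → Fin q, spinZ (σ (cellPoint d m q k a))

/-- The fiber `{σ : F(σ) = η}` of the blocking map over a coarse configuration `η`. -/
def fiber (d m q : ℕ) [NeZero m] [NeZero (m * q)]
    (η : (Fin d → ZMod m) → ℤ) : Finset ((Fin d → ZMod (m * q)) → Bool) :=
  Finset.univ.filter (fun σ => blockF d m q σ = η)

/-- The microscopic Hamiltonian
`H_N(σ) = −(1/2) Σ_x Σ_{y ≠ x} J(x−y) σ(x)σ(y) + h Σ_x σ(x)` on `Λ = (ℤ/nℤ)ᵈ`. -/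
noncomputable def ham (d n : ℕ) [NeZero n] (J : (Fin d → ZMod n) → ℝ) (h : ℝ)
    (σ : (Fin d → ZMod n) → Bool) : ℝ :=
  -(1 / 2) * ∑ x : Fin d → ZMod n, ∑ y ∈ Finset.univ.filter (fun y => y ≠ x),
      J (x - y) * (spin (σ x) * spin (σ y))
    + h * ∑ x : Fin d → ZMod n, spin (σ x)

/-- The centered representative `a/n ∈ (−1/2, 1/2]` of a coordinate `c ∈ ℤ/nℤ`
(here returned as the integer part `a ∈ (−n/2, n/2]`, as a real number). -/
noncomputable def cent (n : ℕ) (c : ZMod n) : ℝ :=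
  if (c.val : ℝ) ≤ (n : ℝ) / 2 then (c.val : ℝ) else (c.val : ℝ) - (n : ℝ)

/-- The centered representative `x̂ ∈ (−1/2, 1/2]ᵈ` of a torus lattice point `x`. -/
noncomputable def hat (d n : ℕ) (x : Fin d → ZMod n) : EuclideanSpace ℝ (Fin d) :=
  WithLp.toLp 2 (fun i => cent n (x i) / (n : ℝ))

/-- The interaction `J(x) = L⁻ᵈ V((n/L) x̂)` for `x ≠ 0`, `J(0) = 0`. -/
noncomputable def Jpot (d n : ℕ) (L : ℝ) (V : EuclideanSpace ℝ (Fin d) → ℝ)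
    (x : Fin d → ZMod n) : ℝ :=
  if x = 0 then 0 else (1 / L ^ d) * V (((n : ℝ) / L) • hat d n x)


noncomputable def icent (n : ℕ) (c : ZMod n) : ℤ :=
  if (c.val : ℝ) ≤ (n : ℝ) / 2 then (c.val : ℤ) else (c.val : ℤ) - (n : ℤ)

lemma cent_eq_icent (n : ℕ) (c : ZMod n) : cent n c = ((icent n c : ℤ) : ℝ) := by
  unfold cent icent; split <;> push_cast <;> ring

lemma icent_cast (n : ℕ) [NeZero n] (c : ZMod n) : ((icent n c : ℤ) : ZMod n) = c := by
  unfold icent; split <;> push_cast <;> simp [ZMod.natCast_zmod_val]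

lemma abs_icent_le (n : ℕ) [NeZero n] (c : ZMod n) : |((icent n c : ℤ) : ℝ)| ≤ (n : ℝ) / 2 := by
  have hv : (c.val : ℝ) < n := by exact_mod_cast ZMod.val_lt c
  have hv0 : (0:ℝ) ≤ (c.val : ℝ) := by positivity
  unfold icent
  split <;> rw [abs_le] <;> constructor <;> push_cast <;> linarith

lemma icent_eq_zero (n : ℕ) [NeZero n] (c : ZMod n) (h : icent n c = 0) : c = 0 := by
  have := icent_cast n c
  rw [h] at this; simpa using this.symm

lemma icent_sub_cases (n : ℕ) [NeZero n] (c c' : ZMod n) (w : ℤ)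
    (hw : ((w : ℤ) : ZMod n) = c - c') (hwb : |(w : ℝ)| ≤ (n : ℝ) / 2) :
    icent n c - icent n c' = w ∨ icent n c - icent n c' = w + n ∨
      icent n c - icent n c' = w - n := by
  have hdvd : (n : ℤ) ∣ (icent n c - icent n c' - w) := by
    have h0 : ((icent n c - icent n c' - w : ℤ) : ZMod n) = 0 := by
      push_cast [icent_cast, hw]; ring
    exact (ZMod.intCast_zmod_eq_zero_iff_dvd _ _).mp h0
  obtain ⟨t, ht⟩ := hdvd
  have h1 := abs_icent_le n c
  have h2 := abs_icent_le n c'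
  have hn : (0:ℝ) < n := by
    have := NeZero.pos n; exact_mod_cast this
  have habs : |((icent n c - icent n c' - w : ℤ) : ℝ)| ≤ 3 / 2 * n := by
    push_cast
    have := abs_sub (((icent n c : ℤ) : ℝ) - ((icent n c' : ℤ) : ℝ)) ((w : ℤ) : ℝ)
    have h3 := abs_sub ((icent n c : ℤ) : ℝ) ((icent n c' : ℤ) : ℝ)
    push_cast at this h3 ⊢
    linarith
  rw [ht] at habs
  have ht' : |(t : ℝ)| ≤ 3 / 2 := by
    push_cast at habs
    rw [abs_mul, abs_of_pos hn] at habs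
    nlinarith
  have ht2 : |t| < 2 := by
    have : |(t:ℝ)| < 2 := lt_of_le_of_lt ht' (by norm_num)
    exact_mod_cast (by push_cast; exact this : (|t| : ℝ) < 2)
  have ht3 := abs_lt.mp ht2
  have : t = 0 ∨ t = 1 ∨ t = -1 := by omega
  rcases this with h | h | h <;> subst h
  · left; linarith
  · right; left; linarith
  · right; right; linarith


section Vlem
variable {d : ℕ} {V : EuclideanSpace ℝ (Fin d) → ℝ} {GV : ℝ}

lemma V_lip (hV : ContDiff ℝ 1 V) (hGV : ∀ z, ‖gradient V z‖ ≤ GV)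
    (z z' : EuclideanSpace ℝ (Fin d)) : |V z - V z'| ≤ GV * ‖z - z'‖ := by
  have hgrad : ∀ x, ‖fderiv ℝ V x‖ = ‖gradient V x‖ := by
    intro x
    rw [gradient]
    exact (LinearIsometryEquiv.norm_map _ _).symm
  have := (convex_univ : Convex ℝ (Set.univ : Set (EuclideanSpace ℝ (Fin d)))).norm_image_sub_le_of_norm_fderiv_le
    (fun x _ => (hV.differentiable one_ne_zero).differentiableAt)
    (fun x _ => by rw [hgrad x]; exact hGV x) (Set.mem_univ z') (Set.mem_univ z)
  simpa [Real.norm_eq_abs] using this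

lemma V_near (hV : ContDiff ℝ 1 V) (hVs : ∀ z, 1 < ‖z‖ → V z = 0)
    (hGV : ∀ z, ‖gradient V z‖ ≤ GV)
    (z : EuclideanSpace ℝ (Fin d)) (hz : z ≠ 0) (t : ℝ) (ht : 0 ≤ t)
    (hzt : 1 - t ≤ ‖z‖) : |V z| ≤ GV * t := by
  have hGV0 : 0 ≤ GV := le_trans (norm_nonneg _) (hGV 0)
  rcases lt_or_ge 1 ‖z‖ with h1 | h1
  · rw [hVs z h1]; simpa using mul_nonneg hGV0 ht
  · apply le_of_forall_pos_le_add
    intro ε hε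
    have hz0 : 0 < ‖z‖ := norm_pos_iff.mpr hz
    set c : ℝ := (1 + ε / (GV + 1)) / ‖z‖ with hc
    have hεp : 0 < ε / (GV + 1) := by positivity
    have hc1 : 1 < c * ‖z‖ := by
      rw [hc, div_mul_cancel₀ _ (ne_of_gt hz0)]; linarith
    have hVz' : V (c • z) = 0 := by
      apply hVs
      rw [norm_smul, Real.norm_eq_abs, abs_of_pos (by positivity : (0:ℝ) < c)]
      exact hc1
    have hcge : 1 ≤ c := by
      rw [hc, le_div_iff₀ hz0]; nlinarith
    have hd : ‖z - c • z‖ = c * ‖z‖ - ‖z‖ := by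
      have : z - c • z = (1 - c) • z := by rw [sub_smul, one_smul]
      rw [this, norm_smul, Real.norm_eq_abs, abs_of_nonpos (by linarith : 1 - c ≤ 0)]
      ring
    have key : |V z| ≤ GV * (c * ‖z‖ - ‖z‖) := by
      have := V_lip hV hGV z (c • z)
      rw [hVz', sub_zero] at this
      rw [← hd]; exact this
    have hcz : c * ‖z‖ - ‖z‖ ≤ t + ε / (GV + 1) := by
      rw [hc, div_mul_cancel₀ _ (ne_of_gt hz0)]; linarith
    calc |V z| ≤ GV * (t + ε / (GV + 1)) := le_trans key (by nlinarith)
      _ ≤ GV * t + ε := by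
          rw [mul_add]
          have : GV * (ε / (GV + 1)) ≤ ε := by
            rw [mul_div_assoc']
            rw [div_le_iff₀ (by linarith : (0:ℝ) < GV + 1)]
            nlinarith
          linarith

end Vlem

section Euc
variable {d : ℕ}

lemma coord_le_norm (z : EuclideanSpace ℝ (Fin d)) (i : Fin d) : |z i| ≤ ‖z‖ := by
  rw [EuclideanSpace.norm_eq, ← Real.sqrt_sq_eq_abs]
  apply Real.sqrt_le_sqrt
  have : |z i| ^ 2 ≤ ∑ j, ‖z j‖ ^ 2 := by
    have := Finset.single_le_sum (f := fun j => ‖z j‖ ^ 2) (fun j _ => by positivity)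
      (Finset.mem_univ i)
    simpa [Real.norm_eq_abs] using this
  simpa [sq_abs] using this

lemma norm_le_dim_mul (z : EuclideanSpace ℝ (Fin d)) (c : ℝ) (hc : 0 ≤ c)
    (h : ∀ i, |z i| ≤ c) : ‖z‖ ≤ d * c := by
  rw [EuclideanSpace.norm_eq]
  have h1 : ∑ j, ‖z j‖ ^ 2 ≤ (d : ℝ) * c ^ 2 := by
    calc ∑ j, ‖z j‖ ^ 2 ≤ ∑ _j : Fin d, c ^ 2 := by
          apply Finset.sum_le_sum
          intro j _
          rw [Real.norm_eq_abs]
          exact pow_le_pow_left₀ (abs_nonneg _) (h j) 2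
      _ = (d : ℝ) * c ^ 2 := by simp [mul_comm]
  have h2 : (d : ℝ) * c ^ 2 ≤ ((d : ℝ) * c) ^ 2 := by
    have : (d:ℝ) ≤ (d:ℝ)^2 := by
      rcases Nat.eq_zero_or_pos d with h | h
      · simp [h]
      · have h1d : (1:ℝ) ≤ (d:ℝ) := by exact_mod_cast h
        nlinarith
    nlinarith [sq_nonneg c]
  calc Real.sqrt (∑ j, ‖z j‖ ^ 2) ≤ Real.sqrt (((d:ℝ) * c) ^ 2) :=
        Real.sqrt_le_sqrt (le_trans h1 h2)
    _ = (d:ℝ) * c := Real.sqrt_sq (by positivity)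

end Euc

lemma scaled_hat_apply (d n : ℕ) (L : ℝ) (hL : L ≠ 0) (hn : (n:ℝ) ≠ 0)
    (Y : Fin d → ZMod n) (i : Fin d) :
    (((n : ℝ) / L) • hat d n Y) i = ((icent n (Y i) : ℤ) : ℝ) / L := by
  have : (((n : ℝ) / L) • hat d n Y) i = ((n : ℝ) / L) * (cent n (Y i) / n) := by
    simp only [hat, PiLp.smul_apply, smul_eq_mul, PiLp.toLp_apply]
  rw [this, cent_eq_icent]
  field_simp

lemma osc_bound_aux (d : ℕ) (hd : 1 ≤ d) (n : ℕ) [NeZero n]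
    (V : EuclideanSpace ℝ (Fin d) → ℝ) (hV : ContDiff ℝ 1 V)
    (hVs : ∀ z, 1 < ‖z‖ → V z = 0)
    (GV : ℝ) (hGV : ∀ z, ‖gradient V z‖ ≤ GV)
    (L : ℝ) (q : ℕ) (hq : 2 ≤ q) (hqL : (q:ℝ) ≤ L) (hLn : 4 * L ≤ (n:ℝ))
    (X X' : Fin d → ZMod n) (hX : X ≠ 0)
    (w : Fin d → ℤ) (hw : ∀ i, ((w i : ℤ) : ZMod n) = X i - X' i)
    (hwb : ∀ i, |((w i : ℤ) : ℝ)| ≤ 2 * q)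
    (hXc : ∀ i, |((icent n (X i) : ℤ) : ℝ)| ≤ L) :
    |V (((n : ℝ) / L) • hat d n X) - V (((n : ℝ) / L) • hat d n X')|
      ≤ GV * (2 * d * q / L) := by
  have hq2 : (2:ℝ) ≤ (q:ℝ) := by exact_mod_cast hq
  have hL0 : (0:ℝ) < L := lt_of_lt_of_le (by linarith) hqL
  have hGV0 : 0 ≤ GV := le_trans (norm_nonneg _) (hGV 0)
  have hn0 : (0:ℝ) < n := by linarith
  have hd1 : (1:ℝ) ≤ (d:ℝ) := by exact_mod_cast hd
  set z := ((n : ℝ) / L) • hat d n X with hzdef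
  set z' := ((n : ℝ) / L) • hat d n X' with hz'def
  have hzi : ∀ i, z i = ((icent n (X i) : ℤ) : ℝ) / L :=
    fun i => scaled_hat_apply d n L (ne_of_gt hL0) (ne_of_gt hn0) X i
  have hz'i : ∀ i, z' i = ((icent n (X' i) : ℤ) : ℝ) / L :=
    fun i => scaled_hat_apply d n L (ne_of_gt hL0) (ne_of_gt hn0) X' i
  by_cases hwrap : ∀ i, icent n (X i) - icent n (X' i) = w i
  · -- no wrap: Lipschitz estimate
    have hcoord : ∀ i, |(z - z') i| ≤ 2 * q / L := by
      intro i
      rw [PiLp.sub_apply, hzi i, hz'i i, div_sub_div_same]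
      have he : ((icent n (X i) : ℤ) : ℝ) - ((icent n (X' i) : ℤ) : ℝ) = ((w i : ℤ) : ℝ) := by
        exact_mod_cast congrArg (fun t : ℤ => (t : ℝ)) (hwrap i)
      rw [he, abs_div, abs_of_pos hL0]
      exact div_le_div_of_nonneg_right (hwb i) hL0.le |>.trans_eq rfl
    calc |V z - V z'| ≤ GV * ‖z - z'‖ := V_lip hV hGV z z'
      _ ≤ GV * ((d:ℝ) * (2 * q / L)) := by
          apply mul_le_mul_of_nonneg_left _ hGV0
          exact norm_le_dim_mul _ _ (by positivity) hcoord
      _ = GV * (2 * d * q / L) := by ring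
  · push_neg at hwrap
    obtain ⟨i, hi⟩ := hwrap
    have hwn : |((w i : ℤ) : ℝ)| ≤ (n:ℝ) / 2 := le_trans (hwb i) (by linarith)
    have hA := abs_le.mp (hXc i)
    have hB := abs_le.mp (abs_icent_le n (X' i))
    have hW := abs_le.mp (hwb i)
    have hkey : L ≤ |((icent n (X' i) : ℤ) : ℝ)| ∧
        (n:ℝ)/2 - 2*(q:ℝ) ≤ |((icent n (X i) : ℤ) : ℝ)| := by
      rcases icent_sub_cases n (X i) (X' i) (w i) (hw i) hwn with h | h | h
      · exact absurd h hi
      · have hr : ((icent n (X i) : ℤ) : ℝ) - ((icent n (X' i) : ℤ) : ℝ)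
            = ((w i : ℤ) : ℝ) + n := by exact_mod_cast congrArg (fun t : ℤ => (t : ℝ)) h
        constructor
        · have : ((icent n (X' i) : ℤ) : ℝ) ≤ -L := by linarith
          calc L ≤ -((icent n (X' i) : ℤ) : ℝ) := by linarith
            _ ≤ |((icent n (X' i) : ℤ) : ℝ)| := neg_le_abs _
        · have : (n:ℝ)/2 - 2*(q:ℝ) ≤ ((icent n (X i) : ℤ) : ℝ) := by linarith
          exact le_trans this (le_abs_self _)
      · have hr : ((icent n (X i) : ℤ) : ℝ) - ((icent n (X' i) : ℤ) : ℝ)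
            = ((w i : ℤ) : ℝ) - n := by exact_mod_cast congrArg (fun t : ℤ => (t : ℝ)) h
        constructor
        · have : L ≤ ((icent n (X' i) : ℤ) : ℝ) := by linarith
          exact le_trans this (le_abs_self _)
        · have : ((icent n (X i) : ℤ) : ℝ) ≤ -((n:ℝ)/2 - 2*(q:ℝ)) := by linarith
          calc (n:ℝ)/2 - 2*(q:ℝ) ≤ -((icent n (X i) : ℤ) : ℝ) := by linarith
            _ ≤ |((icent n (X i) : ℤ) : ℝ)| := neg_le_abs _
    obtain ⟨hBn, hAn⟩ := hkey
    have hz'ige : 1 ≤ |z' i| := by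
      rw [hz'i i, abs_div, abs_of_pos hL0, le_div_iff₀ hL0, one_mul]
      exact hBn
    have hz'ne : z' ≠ 0 := by
      intro h0
      have : z' i = 0 := by rw [h0]; rfl
      rw [this] at hz'ige; simp at hz'ige; linarith
    have hVz' : |V z'| ≤ GV * 0 :=
      V_near hV hVs hGV z' hz'ne 0 le_rfl
        (by rw [sub_zero]; exact le_trans hz'ige (coord_le_norm z' i))
    set t : ℝ := max ((L + 2*(q:ℝ) - (n:ℝ)/2)/L) 0 with htdef
    have ht0 : 0 ≤ t := le_max_right _ _
    have htb : t ≤ 2*(q:ℝ)/L := by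
      apply max_le
      · apply div_le_div_of_nonneg_right ?_ hL0.le |>.trans_eq rfl
        · linarith
      · positivity
    have hzne : z ≠ 0 := by
      intro h0
      apply hX
      funext j
      have hj : z j = 0 := by rw [h0]; rfl
      rw [hzi j] at hj
      have hj3 : icent n (X j) = 0 := by field_simp at hj; simpa using hj
      exact icent_eq_zero n (X j) hj3
    have h1t : 1 - t ≤ ‖z‖ := by
      have hstep : ((n:ℝ)/2 - 2*(q:ℝ))/L ≤ |z i| := by
        rw [hzi i, abs_div, abs_of_pos hL0]
        exact div_le_div_of_nonneg_right hAn hL0.le |>.trans_eq rfl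
      have h2 : 1 - t ≤ ((n:ℝ)/2 - 2*(q:ℝ))/L := by
        have hmax := le_max_left ((L + 2*(q:ℝ) - (n:ℝ)/2)/L) 0
        rw [htdef]
        have heq : (1:ℝ) - (L + 2*(q:ℝ) - (n:ℝ)/2)/L = ((n:ℝ)/2 - 2*(q:ℝ))/L := by
          field_simp; ring
        linarith [heq ▸ (by linarith [hmax] : (1:ℝ) - t ≤ 1 - (L + 2*(q:ℝ) - (n:ℝ)/2)/L)]
      exact le_trans h2 (le_trans hstep (coord_le_norm z i))
    have hVz : |V z| ≤ GV * t := V_near hV hVs hGV z hzne t ht0 h1t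
    calc |V z - V z'| ≤ |V z| + |V z'| := abs_sub _ _
      _ ≤ GV * t + GV * 0 := add_le_add hVz hVz'
      _ ≤ GV * (2*(q:ℝ)/L) := by nlinarith
      _ ≤ GV * (2 * d * q / L) := by
          apply mul_le_mul_of_nonneg_left _ hGV0
          rw [div_le_div_iff₀ hL0 hL0]
          have hpos : 0 ≤ ((d:ℝ) - 1) * (2 * (q:ℝ) * L) :=
            mul_nonneg (by linarith) (by positivity)
          nlinarith

lemma osc_bound (d : ℕ) (hd : 1 ≤ d) (n : ℕ) [NeZero n]
    (V : EuclideanSpace ℝ (Fin d) → ℝ) (hV : ContDiff ℝ 1 V)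
    (hVs : ∀ z, 1 < ‖z‖ → V z = 0)
    (GV : ℝ) (hGV : ∀ z, ‖gradient V z‖ ≤ GV)
    (L : ℝ) (q : ℕ) (hq : 2 ≤ q) (hqL : (q:ℝ) ≤ L) (hLn : 4 * L ≤ (n:ℝ))
    (X X' : Fin d → ZMod n) (hX : X ≠ 0) (hX' : X' ≠ 0)
    (w : Fin d → ℤ) (hw : ∀ i, ((w i : ℤ) : ZMod n) = X i - X' i)
    (hwb : ∀ i, |((w i : ℤ) : ℝ)| ≤ 2 * q) :
    |Jpot d n L V X - Jpot d n L V X'| ≤ 1 / L ^ d * (GV * (2 * d * q / L)) := by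
  have hq2 : (2:ℝ) ≤ (q:ℝ) := by exact_mod_cast hq
  have hL0 : (0:ℝ) < L := lt_of_lt_of_le (by linarith) hqL
  have hn0 : (0:ℝ) < n := by linarith
  have hGV0 : 0 ≤ GV := le_trans (norm_nonneg _) (hGV 0)
  rw [Jpot, if_neg hX, Jpot, if_neg hX', ← mul_sub, abs_mul,
    abs_of_pos (show (0:ℝ) < 1/L^d by positivity)]
  apply mul_le_mul_of_nonneg_left _ (le_of_lt (show (0:ℝ) < 1/L^d by positivity))
  by_cases hc : ∀ i, |((icent n (X i) : ℤ) : ℝ)| ≤ L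
  · exact osc_bound_aux d hd n V hV hVs GV hGV L q hq hqL hLn X X' hX w hw hwb hc
  · by_cases hc' : ∀ i, |((icent n (X' i) : ℤ) : ℝ)| ≤ L
    · rw [abs_sub_comm]
      refine osc_bound_aux d hd n V hV hVs GV hGV L q hq hqL hLn X' X hX'
        (fun i => -(w i)) (fun i => ?_) (fun i => ?_) hc'
      · push_cast
        rw [show ((w i : ℤ) : ZMod n) = X i - X' i from hw i]; ring
      · rw [Int.cast_neg, abs_neg]; exact hwb i
    · push_neg at hc hc'
      obtain ⟨i, hi⟩ := hc
      obtain ⟨i', hi'⟩ := hc'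
      have hbig : ∀ (Y : Fin d → ZMod n) (j : Fin d),
          L < |((icent n (Y j) : ℤ) : ℝ)| → V (((n : ℝ) / L) • hat d n Y) = 0 := by
        intro Y j hYj
        apply hVs
        have h1 : 1 < |(((n : ℝ) / L) • hat d n Y) j| := by
          rw [scaled_hat_apply d n L (ne_of_gt hL0) (ne_of_gt hn0) Y j, abs_div,
            abs_of_pos hL0, lt_div_iff₀ hL0, one_mul]
          exact hYj
        exact lt_of_lt_of_le h1 (coord_le_norm _ j)
      rw [hbig X i hi, hbig X' i' hi']
      simp [mul_nonneg hGV0 (by positivity : (0:ℝ) ≤ 2 * d * q / L)]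

/-- **Summed fluctuation bound over a coarse cell:** there is a constant `C` depending only
on the dimension `d` such that for every spin configuration `σ` and every coarse cell `k`,
`Σ_{l≠k} |Σ_{x∈C_k, y∈C_l} (J(x−y) − J̄(k,l)) σ(x)σ(y)| ≤ C (q^{d+1}/L) ‖∇V‖_∞`. -/
theorem cell_fluctuation_bound
    (d : ℕ) (hd : 1 ≤ d) :
    ∃ C : ℝ, ∀ (m q : ℕ) [NeZero m] [NeZero (m * q)], 1 ≤ m → 2 ≤ q →
      ∀ V : EuclideanSpace ℝ (Fin d) → ℝ, ContDiff ℝ 1 V →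
        (∀ z, V (-z) = V z) →
        (∀ z, 1 < ‖z‖ → V z = 0) →
        ∀ GV : ℝ, (∀ z, ‖gradient V z‖ ≤ GV) →
          ∀ L : ℝ, (q : ℝ) ≤ L → L ≤ ((m : ℝ) * (q : ℝ)) / 4 →
            ∀ σ : (Fin d → ZMod (m * q)) → Bool, ∀ k : Fin d → ZMod m,
              ∑ l ∈ Finset.univ.filter (fun l => l ≠ k),
                |∑ a : Fin d → Fin q, ∑ b : Fin d → Fin q,
                    (Jpot d (m * q) L V (cellPoint d m q k a - cellPoint d m q l b)
                        - (∑ a' : Fin d → Fin q, ∑ b' : Fin d → Fin q,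
                            Jpot d (m * q) L V
                              (cellPoint d m q k a' - cellPoint d m q l b'))
                          / ((q : ℝ) ^ d) ^ 2)
                      * (spin (σ (cellPoint d m q k a)) * spin (σ (cellPoint d m q l b)))|
                ≤ C * ((q : ℝ) ^ (d + 1) / L) * GV := by
  classical
  refine ⟨2 * d * 5 ^ d, ?_⟩
  intro m q _ _ hm hq V hV hVe hVs GV hGV L hL1 hL2 σ k
  have hq2 : (2:ℝ) ≤ (q:ℝ) := by exact_mod_cast hq
  have hL0 : (0:ℝ) < L := lt_of_lt_of_le (by linarith) hL1
  have hGV0 : 0 ≤ GV := le_trans (norm_nonneg _) (hGV 0)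
  have hmq : ((m * q : ℕ) : ℝ) = (m:ℝ) * (q:ℝ) := by push_cast; ring
  have hLn : 4 * L ≤ ((m * q : ℕ) : ℝ) := by rw [hmq]; linarith
  have hn0 : (0:ℝ) < ((m * q : ℕ) : ℝ) := by linarith
  have hq0 : 0 < q := by omega
  have hqR : (0:ℝ) < (q:ℝ) := by linarith
  -- value of cell points
  have hval : ∀ (k' : Fin d → ZMod m) (a : Fin d → Fin q) (i : Fin d),
      (cellPoint d m q k' a i).val = q * (k' i).val + (a i).val := by
    intro k' a i
    have h1 : (k' i).val < m := ZMod.val_lt _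
    have h2 : (a i).val < q := (a i).isLt
    have hlt : q * (k' i).val + (a i).val < m * q := by
      calc q * (k' i).val + (a i).val < q * (k' i).val + q := by omega
        _ = q * ((k' i).val + 1) := by ring
        _ ≤ q * m := Nat.mul_le_mul_left q (by omega)
        _ = m * q := Nat.mul_comm q m
    exact ZMod.val_cast_of_lt hlt
  have hdistinct : ∀ (k' l' : Fin d → ZMod m) (a b : Fin d → Fin q) (i : Fin d),
      cellPoint d m q k' a i = cellPoint d m q l' b i → k' i = l' i := by
    intro k' l' a b i hcp
    have hvv := congrArg ZMod.val hcp
    rw [hval, hval] at hvv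
    have h2 : (a i).val < q := (a i).isLt
    have h3 : (b i).val < q := (b i).isLt
    have hv : (k' i).val = (l' i).val := by
      have e1 : (q * (k' i).val + (a i).val) / q = (k' i).val := by
        rw [Nat.mul_add_div hq0, Nat.div_eq_of_lt h2, Nat.add_zero]
      have e2 : (q * (l' i).val + (b i).val) / q = (l' i).val := by
        rw [Nat.mul_add_div hq0, Nat.div_eq_of_lt h3, Nat.add_zero]
      rw [← e1, ← e2, hvv]
    calc k' i = ((k' i).val : ZMod m) := (ZMod.natCast_zmod_val _).symm
      _ = ((l' i).val : ZMod m) := by rw [hv]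
      _ = l' i := ZMod.natCast_zmod_val _
  have hXne : ∀ (l : Fin d → ZMod m), l ≠ k → ∀ (a b : Fin d → Fin q),
      cellPoint d m q k a - cellPoint d m q l b ≠ 0 := by
    intro l hl a b h0
    apply hl
    funext i
    have hi : cellPoint d m q k a i = cellPoint d m q l b i := by
      have := congrFun h0 i
      rw [Pi.sub_apply, Pi.zero_apply, sub_eq_zero] at this
      exact this
    exact (hdistinct k l a b i hi).symm
  -- per-pair oscillation estimate
  set E : ℝ := 1 / L ^ d * (GV * (2 * d * q / L)) with hE
  have hE0 : 0 ≤ E := by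
    rw [hE]; positivity
  have hosc : ∀ (l : Fin d → ZMod m), l ≠ k → ∀ (a b a' b' : Fin d → Fin q),
      |Jpot d (m * q) L V (cellPoint d m q k a - cellPoint d m q l b)
        - Jpot d (m * q) L V (cellPoint d m q k a' - cellPoint d m q l b')| ≤ E := by
    intro l hl a b a' b'
    refine osc_bound d hd (m * q) V hV hVs GV hGV L q hq hL1 hLn _ _
      (hXne l hl a b) (hXne l hl a' b')
      (fun i => (((a i).val : ℤ) - ((a' i).val : ℤ)) - (((b i).val : ℤ) - ((b' i).val : ℤ)))
      (fun i => ?_) (fun i => ?_)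
    · simp only [Pi.sub_apply, cellPoint]
      push_cast
      ring
    · have h1 : ((a i).val : ℝ) < q := by exact_mod_cast (a i).isLt
      have h2 : ((a' i).val : ℝ) < q := by exact_mod_cast (a' i).isLt
      have h3 : ((b i).val : ℝ) < q := by exact_mod_cast (b i).isLt
      have h4 : ((b' i).val : ℝ) < q := by exact_mod_cast (b' i).isLt
      have h5 : (0:ℝ) ≤ ((a i).val : ℝ) := by positivity
      have h6 : (0:ℝ) ≤ ((a' i).val : ℝ) := by positivity
      have h7 : (0:ℝ) ≤ ((b i).val : ℝ) := by positivity
      have h8 : (0:ℝ) ≤ ((b' i).val : ℝ) := by positivity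
      rw [abs_le]
      constructor <;> push_cast <;> linarith
  have hQcard : (Finset.univ : Finset (Fin d → Fin q)).card = q ^ d := by
    simp [Finset.card_univ]
  set Q2 : ℝ := ((q : ℝ) ^ d) ^ 2 with hQ2def
  have hQ2pos : (0:ℝ) < Q2 := by rw [hQ2def]; positivity
  -- bound on each |J - Jbar|
  have hJbar : ∀ (l : Fin d → ZMod m), l ≠ k → ∀ (a b : Fin d → Fin q),
      |Jpot d (m * q) L V (cellPoint d m q k a - cellPoint d m q l b)
        - (∑ a' : Fin d → Fin q, ∑ b' : Fin d → Fin q,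
            Jpot d (m * q) L V (cellPoint d m q k a' - cellPoint d m q l b')) / Q2| ≤ E := by
    intro l hl a b
    set Jab := Jpot d (m * q) L V (cellPoint d m q k a - cellPoint d m q l b) with hJab
    set S := ∑ a' : Fin d → Fin q, ∑ b' : Fin d → Fin q,
        Jpot d (m * q) L V (cellPoint d m q k a' - cellPoint d m q l b') with hS
    have hsum : ∑ a' : Fin d → Fin q, ∑ b' : Fin d → Fin q,
        (Jab - Jpot d (m * q) L V (cellPoint d m q k a' - cellPoint d m q l b'))
          = Q2 * Jab - S := by
      rw [hS, hQ2def]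
      simp only [Finset.sum_sub_distrib, Finset.sum_const, hQcard, nsmul_eq_mul]
      push_cast
      ring
    have hkey : Jab - S / Q2 = (1 / Q2) * (Q2 * Jab - S) := by
      field_simp
    rw [hkey, ← hsum, abs_mul, abs_of_pos (by positivity : (0:ℝ) < 1 / Q2)]
    have habs : |∑ a' : Fin d → Fin q, ∑ b' : Fin d → Fin q,
        (Jab - Jpot d (m * q) L V (cellPoint d m q k a' - cellPoint d m q l b'))| ≤ Q2 * E := by
      calc |∑ a' : Fin d → Fin q, ∑ b' : Fin d → Fin q,
          (Jab - Jpot d (m * q) L V (cellPoint d m q k a' - cellPoint d m q l b'))|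
          ≤ ∑ a' : Fin d → Fin q, |∑ b' : Fin d → Fin q,
            (Jab - Jpot d (m * q) L V (cellPoint d m q k a' - cellPoint d m q l b'))| :=
            Finset.abs_sum_le_sum_abs _ _
        _ ≤ ∑ _a' : Fin d → Fin q, ((q:ℝ)^d * E) := by
            apply Finset.sum_le_sum
            intro a' _
            calc |∑ b' : Fin d → Fin q,
                (Jab - Jpot d (m * q) L V (cellPoint d m q k a' - cellPoint d m q l b'))|
                ≤ ∑ b' : Fin d → Fin q, |Jab - Jpot d (m * q) L V
                    (cellPoint d m q k a' - cellPoint d m q l b')| :=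
                  Finset.abs_sum_le_sum_abs _ _
              _ ≤ ∑ _b' : Fin d → Fin q, E :=
                  Finset.sum_le_sum (fun b' _ => hosc l hl a b a' b')
              _ = (q:ℝ)^d * E := by
                  rw [Finset.sum_const, hQcard, nsmul_eq_mul]; push_cast; ring
        _ = Q2 * E := by
            rw [Finset.sum_const, hQcard, nsmul_eq_mul, hQ2def]; push_cast; ring
    calc (1 / Q2) * |∑ a' : Fin d → Fin q, ∑ b' : Fin d → Fin q,
        (Jab - Jpot d (m * q) L V (cellPoint d m q k a' - cellPoint d m q l b'))|
        ≤ (1 / Q2) * (Q2 * E) := by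
          apply mul_le_mul_of_nonneg_left habs (by positivity)
      _ = E := by field_simp
  -- bound on the inner double sum, active cells
  have hspin : ∀ x y : Bool, |spin x * spin y| = 1 := by
    intro x y; cases x <;> cases y <;> norm_num [spin]
  have hcellbound : ∀ (l : Fin d → ZMod m), l ≠ k →
      |∑ a : Fin d → Fin q, ∑ b : Fin d → Fin q,
          (Jpot d (m * q) L V (cellPoint d m q k a - cellPoint d m q l b)
            - (∑ a' : Fin d → Fin q, ∑ b' : Fin d → Fin q,
                Jpot d (m * q) L V (cellPoint d m q k a' - cellPoint d m q l b')) / Q2)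
            * (spin (σ (cellPoint d m q k a)) * spin (σ (cellPoint d m q l b)))|
        ≤ Q2 * E := by
    intro l hl
    calc |∑ a : Fin d → Fin q, ∑ b : Fin d → Fin q,
        (Jpot d (m * q) L V (cellPoint d m q k a - cellPoint d m q l b)
          - (∑ a' : Fin d → Fin q, ∑ b' : Fin d → Fin q,
              Jpot d (m * q) L V (cellPoint d m q k a' - cellPoint d m q l b')) / Q2)
          * (spin (σ (cellPoint d m q k a)) * spin (σ (cellPoint d m q l b)))|
        ≤ ∑ a : Fin d → Fin q, |∑ b : Fin d → Fin q,
            (Jpot d (m * q) L V (cellPoint d m q k a - cellPoint d m q l b)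
              - (∑ a' : Fin d → Fin q, ∑ b' : Fin d → Fin q,
                  Jpot d (m * q) L V (cellPoint d m q k a' - cellPoint d m q l b')) / Q2)
              * (spin (σ (cellPoint d m q k a)) * spin (σ (cellPoint d m q l b)))| :=
          Finset.abs_sum_le_sum_abs _ _
      _ ≤ ∑ _a : Fin d → Fin q, ((q:ℝ)^d * E) := by
          apply Finset.sum_le_sum
          intro a _
          calc |∑ b : Fin d → Fin q,
              (Jpot d (m * q) L V (cellPoint d m q k a - cellPoint d m q l b)
                - (∑ a' : Fin d → Fin q, ∑ b' : Fin d → Fin q,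
                    Jpot d (m * q) L V (cellPoint d m q k a' - cellPoint d m q l b')) / Q2)
                * (spin (σ (cellPoint d m q k a)) * spin (σ (cellPoint d m q l b)))|
              ≤ ∑ b : Fin d → Fin q, |(Jpot d (m * q) L V
                  (cellPoint d m q k a - cellPoint d m q l b)
                - (∑ a' : Fin d → Fin q, ∑ b' : Fin d → Fin q,
                    Jpot d (m * q) L V (cellPoint d m q k a' - cellPoint d m q l b')) / Q2)
                * (spin (σ (cellPoint d m q k a)) * spin (σ (cellPoint d m q l b)))| :=
                Finset.abs_sum_le_sum_abs _ _
            _ ≤ ∑ _b : Fin d → Fin q, E := by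
                apply Finset.sum_le_sum
                intro b _
                rw [abs_mul, hspin]
                rw [mul_one]
                exact hJbar l hl a b
            _ = (q:ℝ)^d * E := by
                rw [Finset.sum_const, hQcard, nsmul_eq_mul]; push_cast; ring
      _ = Q2 * E := by
          rw [Finset.sum_const, hQcard, nsmul_eq_mul, hQ2def]; push_cast; ring
    -- the cell-difference vector
  set D : (Fin d → ZMod m) → (Fin d → ZMod (m * q)) :=
      fun l i => ((q * (k i).val : ℕ) : ZMod (m * q)) - ((q * (l i).val : ℕ) : ZMod (m * q))
      with hD
  -- inactive cells give zero contribution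
  have hJzero : ∀ (l : Fin d → ZMod m), l ≠ k →
      ¬(∀ i, |((icent (m * q) (D l i) : ℤ) : ℝ)| ≤ L + q) →
      ∀ (a b : Fin d → Fin q),
        Jpot d (m * q) L V (cellPoint d m q k a - cellPoint d m q l b) = 0 := by
    intro l hl hnact a b
    by_contra hJ
    apply hnact
    have hXne' := hXne l hl a b
    rw [Jpot, if_neg hXne'] at hJ
    have hVne : V ((((m * q : ℕ) : ℝ) / L) • hat d (m * q)
        (cellPoint d m q k a - cellPoint d m q l b)) ≠ 0 := by
      intro h0; rw [h0, mul_zero] at hJ; exact hJ rfl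
    have hnorm : ‖(((m * q : ℕ) : ℝ) / L) • hat d (m * q)
        (cellPoint d m q k a - cellPoint d m q l b)‖ ≤ 1 := by
      by_contra hgt
      push_neg at hgt
      exact hVne (hVs _ hgt)
    have hic : ∀ i, |((icent (m * q)
        ((cellPoint d m q k a - cellPoint d m q l b) i) : ℤ) : ℝ)| ≤ L := by
      intro i
      have h1 := le_trans (coord_le_norm _ i) hnorm
      rw [scaled_hat_apply d (m * q) L (ne_of_gt hL0) (ne_of_gt hn0) _ i, abs_div,
        abs_of_pos hL0, div_le_one hL0] at h1
      exact h1
    intro i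
    have havw : (0:ℝ) ≤ ((a i).val : ℝ) ∧ ((a i).val : ℝ) ≤ (q:ℝ) - 1 := by
      constructor
      · positivity
      · have : ((a i).val : ℝ) < q := by exact_mod_cast (a i).isLt
        have : (a i).val ≤ q - 1 := by omega
        have h' : ((a i).val : ℝ) ≤ ((q - 1 : ℕ) : ℝ) := by exact_mod_cast this
        rw [Nat.cast_sub (by omega)] at h'
        simpa using h'
    have hbvw : (0:ℝ) ≤ ((b i).val : ℝ) ∧ ((b i).val : ℝ) ≤ (q:ℝ) - 1 := by
      constructor
      · positivity
      · have : (b i).val ≤ q - 1 := by omega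
        have h' : ((b i).val : ℝ) ≤ ((q - 1 : ℕ) : ℝ) := by exact_mod_cast this
        rw [Nat.cast_sub (by omega)] at h'
        simpa using h'
    set wi : ℤ := ((a i).val : ℤ) - ((b i).val : ℤ) with hwi
    have hwcast : ((wi : ℤ) : ZMod (m * q))
        = (cellPoint d m q k a - cellPoint d m q l b) i - D l i := by
      simp only [hD, hwi, Pi.sub_apply, cellPoint]
      push_cast
      ring
    have hwabs : |((wi : ℤ) : ℝ)| ≤ (q:ℝ) - 1 := by
      rw [hwi, abs_le]
      constructor <;> push_cast <;> linarith [havw.1, havw.2, hbvw.1, hbvw.2]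
    have hwn2 : |((wi : ℤ) : ℝ)| ≤ ((m * q : ℕ) : ℝ) / 2 := by
      refine le_trans hwabs (by linarith)
    have hDb := abs_le.mp (abs_icent_le (m * q) (D l i))
    have hXb := abs_le.mp (hic i)
    have hWb := abs_le.mp hwabs
    rcases icent_sub_cases (m * q) ((cellPoint d m q k a - cellPoint d m q l b) i)
        (D l i) wi hwcast hwn2 with h | h | h
    · -- no wrap
      have hr : ((icent (m * q) ((cellPoint d m q k a - cellPoint d m q l b) i) : ℤ) : ℝ)
          - ((icent (m * q) (D l i) : ℤ) : ℝ) = ((wi : ℤ) : ℝ) := by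
        exact_mod_cast congrArg (fun t : ℤ => (t : ℝ)) h
      rw [abs_le]; constructor <;> linarith
    · have hr : ((icent (m * q) ((cellPoint d m q k a - cellPoint d m q l b) i) : ℤ) : ℝ)
          - ((icent (m * q) (D l i) : ℤ) : ℝ) = ((wi : ℤ) : ℝ) + ((m * q : ℕ) : ℝ) := by
        exact_mod_cast congrArg (fun t : ℤ => (t : ℝ)) h
      exfalso; linarith
    · have hr : ((icent (m * q) ((cellPoint d m q k a - cellPoint d m q l b) i) : ℤ) : ℝ)
          - ((icent (m * q) (D l i) : ℤ) : ℝ) = ((wi : ℤ) : ℝ) - ((m * q : ℕ) : ℝ) := by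
        exact_mod_cast congrArg (fun t : ℤ => (t : ℝ)) h
      exfalso; linarith
  have hinner_zero : ∀ (l : Fin d → ZMod m), l ≠ k →
      ¬(∀ i, |((icent (m * q) (D l i) : ℤ) : ℝ)| ≤ L + q) →
      (∑ a : Fin d → Fin q, ∑ b : Fin d → Fin q,
          (Jpot d (m * q) L V (cellPoint d m q k a - cellPoint d m q l b)
            - (∑ a' : Fin d → Fin q, ∑ b' : Fin d → Fin q,
                Jpot d (m * q) L V (cellPoint d m q k a' - cellPoint d m q l b')) / Q2)
            * (spin (σ (cellPoint d m q k a)) * spin (σ (cellPoint d m q l b)))) = 0 := by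
    intro l hl hnact
    have hS0 : (∑ a' : Fin d → Fin q, ∑ b' : Fin d → Fin q,
        Jpot d (m * q) L V (cellPoint d m q k a' - cellPoint d m q l b')) = 0 :=
      Finset.sum_eq_zero (fun a' _ => Finset.sum_eq_zero (fun b' _ => hJzero l hl hnact a' b'))
    apply Finset.sum_eq_zero
    intro a _
    apply Finset.sum_eq_zero
    intro b _
    rw [hJzero l hl hnact a b, hS0]
    simp
  -- divisibility of the cell-difference representative
  have hdvd : ∀ (l : Fin d → ZMod m) (i : Fin d),
      (q : ℤ) ∣ icent (m * q) (D l i) := by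
    intro l i
    have h0 : ((icent (m * q) (D l i)
        - ((q:ℤ) * ((k i).val : ℤ) - (q:ℤ) * ((l i).val : ℤ)) : ℤ) : ZMod (m * q)) = 0 := by
      push_cast [icent_cast]
      simp only [hD]
      push_cast
      ring
    obtain ⟨t, ht⟩ := (ZMod.intCast_zmod_eq_zero_iff_dvd _ _).mp h0
    refine ⟨((k i).val : ℤ) - ((l i).val : ℤ) + (m : ℤ) * t, ?_⟩
    push_cast at ht
    have h1 : icent (m * q) (D l i)
        = (q:ℤ) * ((k i).val : ℤ) - (q:ℤ) * ((l i).val : ℤ) + ((m:ℤ) * (q:ℤ)) * t := by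
      linarith
    rw [h1]; ring
  -- the set of active cells is small
  set B : ℕ := ⌊L / (q:ℝ)⌋₊ + 1 with hB
  have hcount : (Finset.univ.filter (fun l : Fin d → ZMod m =>
      ∀ i, |((icent (m * q) (D l i) : ℤ) : ℝ)| ≤ L + q)).card ≤ (2 * B + 1) ^ d := by
    have hIcc : (Fintype.piFinset (fun _ : Fin d => Finset.Icc (-(B:ℤ)) (B:ℤ))).card
        = (2 * B + 1) ^ d := by
      rw [Fintype.card_piFinset]
      rw [Finset.prod_const, Finset.card_univ, Fintype.card_fin]
      congr 1
      rw [Int.card_Icc]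
      omega
    rw [← hIcc]
    apply Finset.card_le_card_of_injOn (fun l => fun i => icent (m * q) (D l i) / (q:ℤ))
    · intro l hl
      rw [Finset.mem_coe, Finset.mem_filter] at hl
      rw [Finset.mem_coe, Fintype.mem_piFinset]
      intro i
      beta_reduce
      rw [Finset.mem_Icc]
      obtain ⟨u, hu⟩ := hdvd l i
      have hq0' : (q:ℤ) ≠ 0 := by exact_mod_cast hq0.ne'
      rw [hu, Int.mul_ediv_cancel_left _ hq0']
      have h1 : (q:ℝ) * |(u : ℝ)| ≤ L + q := by
        have h2 := hl.2 i
        rw [hu] at h2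
        push_cast at h2
        rwa [abs_mul, abs_of_pos hqR] at h2
      have h2 : |(u:ℝ)| ≤ L / q + 1 := by
        rw [← le_div_iff₀' hqR] at h1
        refine le_trans h1 (le_of_eq ?_)
        field_simp
      have h3 : L / (q:ℝ) + 1 < (B:ℝ) + 1 := by
        have h5 := Nat.lt_floor_add_one (L / (q:ℝ))
        have h6 : (B:ℝ) = ((⌊L / (q:ℝ)⌋₊ : ℕ) : ℝ) + 1 := by rw [hB]; push_cast; ring
        linarith
      have h6 : |(u:ℝ)| < (B:ℝ) + 1 := lt_of_le_of_lt h2 h3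
      have h4 : |u| < (B:ℤ) + 1 := by exact_mod_cast h6
      have h5 : |u| ≤ (B:ℤ) := by omega
      exact abs_le.mp h5
    · intro l hl l' hl' hfeq
      funext i
      have h1 : icent (m * q) (D l i) / (q:ℤ) = icent (m * q) (D l' i) / (q:ℤ) :=
        congrFun hfeq i
      obtain ⟨u, hu⟩ := hdvd l i
      obtain ⟨u', hu'⟩ := hdvd l' i
      have hq0' : (q:ℤ) ≠ 0 := by exact_mod_cast hq0.ne'
      rw [hu, hu', Int.mul_ediv_cancel_left _ hq0', Int.mul_ediv_cancel_left _ hq0'] at h1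
      have h2 : icent (m * q) (D l i) = icent (m * q) (D l' i) := by rw [hu, hu', h1]
      have h3 : D l i = D l' i := by
        rw [← icent_cast (m * q) (D l i), ← icent_cast (m * q) (D l' i), h2]
      simp only [hD] at h3
      rw [sub_right_inj] at h3
      have h4 : q * (l i).val = q * (l' i).val := by
        have hlt : ∀ (x : Fin d → ZMod m) (j : Fin d), q * (x j).val < m * q := by
          intro x j
          have hv : (x j).val < m := ZMod.val_lt _
          calc q * (x j).val < q * (x j).val + q := by omega
            _ = q * ((x j).val + 1) := by ring
            _ ≤ q * m := Nat.mul_le_mul_left q (by omega)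
            _ = m * q := Nat.mul_comm q m
        have := congrArg ZMod.val h3
        rwa [ZMod.val_cast_of_lt (hlt l i), ZMod.val_cast_of_lt (hlt l' i)] at this
      have h5 : (l i).val = (l' i).val := Nat.eq_of_mul_eq_mul_left hq0 h4
      calc l i = ((l i).val : ZMod m) := (ZMod.natCast_zmod_val _).symm
        _ = ((l' i).val : ZMod m) := by rw [h5]
        _ = l' i := ZMod.natCast_zmod_val _
  -- assemble the final estimate
  set f : (Fin d → ZMod m) → ℝ := fun l =>
      |∑ a : Fin d → Fin q, ∑ b : Fin d → Fin q,
          (Jpot d (m * q) L V (cellPoint d m q k a - cellPoint d m q l b)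
            - (∑ a' : Fin d → Fin q, ∑ b' : Fin d → Fin q,
                Jpot d (m * q) L V (cellPoint d m q k a' - cellPoint d m q l b')) / Q2)
            * (spin (σ (cellPoint d m q k a)) * spin (σ (cellPoint d m q l b)))| with hf
  show ∑ l ∈ Finset.univ.filter (fun l => l ≠ k), f l ≤ _
  set act : (Fin d → ZMod m) → Prop := fun l =>
      ∀ i, |((icent (m * q) (D l i) : ℤ) : ℝ)| ≤ L + q with hactdef
  have hsplit := Finset.sum_filter_add_sum_filter_not
      (Finset.univ.filter (fun l : Fin d → ZMod m => l ≠ k)) act f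
  have hzero2 : ∑ l ∈ (Finset.univ.filter (fun l : Fin d → ZMod m => l ≠ k)).filter
      (fun l => ¬ act l), f l = 0 := by
    apply Finset.sum_eq_zero
    intro l hlm
    rw [Finset.mem_filter, Finset.mem_filter] at hlm
    simp only [hf]
    rw [hinner_zero l hlm.1.2 hlm.2]
    exact abs_zero
  have hbound1 : ∑ l ∈ (Finset.univ.filter (fun l : Fin d → ZMod m => l ≠ k)).filter act, f l
      ≤ (((Finset.univ.filter (fun l : Fin d → ZMod m => l ≠ k)).filter act).card : ℝ)
        * (Q2 * E) := by
    have := Finset.sum_le_card_nsmul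
      ((Finset.univ.filter (fun l : Fin d → ZMod m => l ≠ k)).filter act) f (Q2 * E)
      (fun l hlm => by
        rw [Finset.mem_filter, Finset.mem_filter] at hlm
        exact hcellbound l hlm.1.2)
    rwa [nsmul_eq_mul] at this
  have hcard2 : ((Finset.univ.filter (fun l : Fin d → ZMod m => l ≠ k)).filter act).card
      ≤ (2 * B + 1) ^ d := by
    refine le_trans (Finset.card_le_card ?_) hcount
    intro l hlm
    rw [Finset.mem_filter] at hlm ⊢
    exact ⟨Finset.mem_univ l, hlm.2⟩
  have hQ2E : 0 ≤ Q2 * E := mul_nonneg hQ2pos.le hE0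
  have h2B : ((2 * B + 1 : ℕ) : ℝ) ≤ 5 * L / (q:ℝ) := by
    have hfloor : ((⌊L / (q:ℝ)⌋₊ : ℕ) : ℝ) ≤ L / q := Nat.floor_le (by positivity)
    have h1q : (1:ℝ) ≤ L / q := by rw [le_div_iff₀ hqR]; linarith
    rw [hB]
    push_cast
    rw [mul_div_assoc]
    linarith
  have hfinal : ∑ l ∈ Finset.univ.filter (fun l : Fin d → ZMod m => l ≠ k), f l
      ≤ (5 * L / (q:ℝ)) ^ d * (Q2 * E) := by
    rw [← hsplit, hzero2, add_zero]
    refine le_trans hbound1 ?_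
    have hc : (((Finset.univ.filter (fun l : Fin d → ZMod m => l ≠ k)).filter act).card : ℝ)
        ≤ ((2 * B + 1 : ℕ) : ℝ) ^ d := by
      have : (((Finset.univ.filter (fun l : Fin d → ZMod m => l ≠ k)).filter act).card : ℝ)
          ≤ (((2 * B + 1) ^ d : ℕ) : ℝ) := by exact_mod_cast hcard2
      rwa [Nat.cast_pow] at this
    refine le_trans (mul_le_mul_of_nonneg_right hc hQ2E) ?_
    apply mul_le_mul_of_nonneg_right _ hQ2E
    exact pow_le_pow_left₀ (by positivity) h2B d
  refine le_trans hfinal (le_of_eq ?_)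
  rw [hQ2def, hE, div_pow, mul_pow]
  field_simp
  ring
end

section
/- Assume Q ≥ 2, let k ≠ l be two distinct cells, let η be a coarse configuration with P̄(η) > 0, and set α_k = (η(k)+Q)/2, α_l = (η(l)+Q)/2. Let a(x,y) = J(x−y) − J̄(k,l) for x ∈ C_k, y ∈ C_l, where J̄(k,l) = Q^{−2} Σ_{x∈C_k, y∈C_l} J(x−y) (so Σ_{x,y} a(x,y) = 0), and define j¹ = Σ_{x∈C_k, y∈C_l} a(x,y)², jᵏ = Σ_{x∈C_k} Σ_{y,y'∈C_l} a(x,y)a(x,y'), jˡ = Σ_{y∈C_l} Σ_{x,x'∈C_k} a(x,y)a(x',y). Then the conditional second moment of the fluctuation S(σ) = Σ_{x∈C_k, y∈C_l} a(x,y) σ(x)σ(y) is E[S² | F = η] = jᵏ·E₂(α_l)(1 − E₂(α_k)) + jˡ·E₂(α_k)(1 − E₂(α_l)) + j¹·(1 − E₂(α_k))(1 − E₂(α_l)). -/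
open Finset

set_option linter.unusedSectionVars false

section
variable (d m q : ℕ) [NeZero m] [NeZero (m * q)]

lemma cp_lt (k : ZMod m) (a : Fin q) : q * k.val + a.val < m * q := by
  have h1 : k.val < m := ZMod.val_lt k
  have h2 : a.val < q := a.2
  calc q * k.val + a.val < q * k.val + q := by omega
    _ = q * (k.val + 1) := by ring
    _ ≤ q * m := Nat.mul_le_mul_left q h1
    _ = m * q := Nat.mul_comm q m

lemma cp_val (k : ZMod m) (a : Fin q) :
    (((q * k.val + a.val : ℕ) : ZMod (m * q))).val = q * k.val + a.val :=
  ZMod.val_cast_of_lt (cp_lt m q k a)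

def ptK (z : Fin d → ZMod (m * q)) : Fin d → ZMod m :=
  fun i => (((z i).val / q : ℕ) : ZMod m)

def ptA (hq : 0 < q) (z : Fin d → ZMod (m * q)) : Fin d → Fin q :=
  fun i => ⟨(z i).val % q, Nat.mod_lt _ hq⟩

lemma ptK_cellPoint (hq : 0 < q) (k : Fin d → ZMod m) (a : Fin d → Fin q) :
    ptK d m q (cellPoint d m q k a) = k := by
  funext i
  simp only [ptK, cellPoint, cp_val]
  rw [Nat.mul_add_div hq, Nat.div_eq_of_lt (a i).2, Nat.add_zero,
    ZMod.natCast_val, ZMod.cast_id]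

lemma ptA_cellPoint (hq : 0 < q) (k : Fin d → ZMod m) (a : Fin d → Fin q) :
    ptA d m q hq (cellPoint d m q k a) = a := by
  funext i
  simp only [ptA, cellPoint, cp_val]
  ext
  simp only []
  rw [Nat.mul_add_mod, Nat.mod_eq_of_lt (a i).2]

lemma cellPoint_pt (hq : 0 < q) (z : Fin d → ZMod (m * q)) :
    cellPoint d m q (ptK d m q z) (ptA d m q hq z) = z := by
  funext i
  simp only [cellPoint, ptK, ptA]
  have hlt : (z i).val / q < m := by
    rw [Nat.div_lt_iff_lt_mul hq]
    exact (ZMod.val_lt (z i))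
  rw [ZMod.val_cast_of_lt hlt, Nat.div_add_mod, ZMod.natCast_val, ZMod.cast_id]

end

lemma spin_eq_cast (b : Bool) : spin b = (spinZ b : ℝ) := by cases b <;> simp [spin, spinZ]

lemma spin_sq (b : Bool) : spin b * spin b = 1 := by cases b <;> simp [spin]

section cell
variable {d q : ℕ}

abbrev cellG (d q : ℕ) (t : ℤ) : Finset ((Fin d → Fin q) → Bool) :=
  Finset.univ.filter (fun f => ∑ a : Fin d → Fin q, spinZ (f a) = t)

lemma cellG_perm (t : ℤ) (π : (Fin d → Fin q) ≃ (Fin d → Fin q)) (f : (Fin d → Fin q) → Bool) :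
    f ∘ π ∈ cellG d q t ↔ f ∈ cellG d q t := by
  simp only [cellG, Finset.mem_filter, Finset.mem_univ, true_and, Function.comp]
  rw [Equiv.sum_comp π (fun a => spinZ (f a))]

/-- symmetry: the pair correlation is the same for all ordered pairs of distinct sites -/
lemma cell_corr_symm (t : ℤ) {a a' b b' : Fin d → Fin q} (ha : a ≠ a') (hb : b ≠ b') :
    ∑ f ∈ cellG d q t, spin (f a) * spin (f a')
      = ∑ f ∈ cellG d q t, spin (f b) * spin (f b') := by
  set π₁ := Equiv.swap b a with hπ₁
  have h1 : π₁ b = a := Equiv.swap_apply_left b a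
  have hne1 : π₁ b' ≠ a := by
    intro h
    exact hb ((π₁.injective (h.trans h1.symm)).symm)
  set π : (Fin d → Fin q) ≃ (Fin d → Fin q) := π₁.trans (Equiv.swap (π₁ b') a') with hπ
  have hπb : π b = a := by
    simp only [hπ, Equiv.trans_apply, h1]
    exact Equiv.swap_apply_of_ne_of_ne (Ne.symm hne1) ha
  have hπb' : π b' = a' := by
    simp only [hπ, Equiv.trans_apply]
    exact Equiv.swap_apply_left _ _
  apply Finset.sum_nbij' (fun f => f ∘ π) (fun f => f ∘ π.symm)
  · intro f hf; exact (cellG_perm t π f).mpr hf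
  · intro f hf; exact (cellG_perm t π.symm f).mpr hf
  · intro f _; funext x; simp
  · intro f _; funext x; simp
  · intro f _
    simp only [Function.comp, hπb, hπb']

lemma card_cellA : Fintype.card (Fin d → Fin q) = q ^ d := by simp

/-- the pair correlation in the fixed-magnetization ensemble -/
lemma cell_corr (hQ : 2 ≤ q ^ d) (t : ℤ) {a a' : Fin d → Fin q} (h : a ≠ a') :
    ∑ f ∈ cellG d q t, spin (f a) * spin (f a')
      = ((cellG d q t).card : ℝ) * ((t : ℝ) ^ 2 - (q : ℝ) ^ d)
          / ((q : ℝ) ^ d * ((q : ℝ) ^ d - 1)) := by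
  set G := cellG d q t with hG
  set N : ℝ := (G.card : ℝ) with hN
  set c₀ : ℝ := ∑ f ∈ G, spin (f a) * spin (f a') with hc₀
  set Q : ℕ := q ^ d with hQdef
  -- second moment identity
  have key : ∑ f ∈ G, (∑ x : Fin d → Fin q, spin (f x)) ^ 2 = N * (t : ℝ) ^ 2 := by
    rw [Finset.sum_congr rfl (fun f hf => ?_), Finset.sum_const, nsmul_eq_mul]
    have : ∑ x : Fin d → Fin q, spin (f x) = (t : ℝ) := by
      have ht : ∑ x : Fin d → Fin q, spinZ (f x) = t := (Finset.mem_filter.mp hf).2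
      rw [Finset.sum_congr rfl (fun x _ => spin_eq_cast (f x)), ← Int.cast_sum, ht]
    rw [this]
  -- expand the square and swap sums
  have expand : ∑ f ∈ G, (∑ x : Fin d → Fin q, spin (f x)) ^ 2
      = ∑ x : Fin d → Fin q, ∑ y : Fin d → Fin q, ∑ f ∈ G, spin (f x) * spin (f y) := by
    rw [Finset.sum_congr rfl (fun f _ => by rw [sq, Finset.sum_mul_sum]), Finset.sum_comm]
    exact Finset.sum_congr rfl (fun x _ => Finset.sum_comm)
  -- each inner sum is N on diagonal, c₀ off diagonal
  have inner : ∀ x y : Fin d → Fin q, ∑ f ∈ G, spin (f x) * spin (f y)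
      = if y = x then N else c₀ := by
    intro x y
    by_cases hxy : y = x
    · subst hxy
      rw [if_pos rfl, hN]
      rw [Finset.sum_congr rfl (fun f _ => spin_sq (f y)), Finset.sum_const, nsmul_eq_mul,
        mul_one]
    · rw [if_neg hxy]
      exact cell_corr_symm t (fun hh => hxy hh.symm) h
  have count : ∑ x : Fin d → Fin q, ∑ y : Fin d → Fin q, ∑ f ∈ G, spin (f x) * spin (f y)
      = (Q : ℝ) * N + (Q : ℝ) * ((Q : ℝ) - 1) * c₀ := by
    have hQcard : Fintype.card (Fin d → Fin q) = Q := card_cellA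
    have hone : ∀ x : Fin d → Fin q, ∑ y : Fin d → Fin q,
        (if y = x then N else c₀) = N + ((Q : ℝ) - 1) * c₀ := by
      intro x
      rw [← Finset.add_sum_erase _ _ (Finset.mem_univ x), if_pos rfl]
      congr 1
      rw [Finset.sum_congr rfl (fun y hy => if_neg (Finset.ne_of_mem_erase hy)),
        Finset.sum_const, nsmul_eq_mul, Finset.card_erase_of_mem (Finset.mem_univ x),
        Finset.card_univ, hQcard]
      have : (1:ℕ) ≤ Q := le_trans one_le_two hQ
      push_cast [this]
      ring
    rw [Finset.sum_congr rfl (fun x _ => by rw [Finset.sum_congr rfl (fun y _ => inner x y), hone x]),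
      Finset.sum_const, nsmul_eq_mul, Finset.card_univ, hQcard]
    ring
  have main : N * (t : ℝ) ^ 2 = (Q : ℝ) * N + (Q : ℝ) * ((Q : ℝ) - 1) * c₀ := by
    rw [← key, expand, count]
  have hQ1 : (1:ℝ) < (Q : ℝ) := by exact_mod_cast lt_of_lt_of_le one_lt_two hQ
  have hQne : (Q : ℝ) * ((Q : ℝ) - 1) ≠ 0 := by
    apply mul_ne_zero <;> nlinarith
  have : c₀ = N * ((t : ℝ) ^ 2 - (Q : ℝ)) / ((Q : ℝ) * ((Q : ℝ) - 1)) := by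
    rw [eq_div_iff hQne]
    nlinarith [main]
  rw [this]
  push_cast [hQdef]
  ring_nf

end cell

section factor
variable (d m q : ℕ) [NeZero m] [NeZero (m * q)] (hq : 0 < q)
  (η : (Fin d → ZMod m) → ℤ)

/-- the coordinate map on configurations -/
def Φmap (σ : (Fin d → ZMod (m * q)) → Bool) : (Fin d → ZMod m) → (Fin d → Fin q) → Bool :=
  fun i a => σ (cellPoint d m q i a)

def Ψmap (τ : (Fin d → ZMod m) → (Fin d → Fin q) → Bool) : (Fin d → ZMod (m * q)) → Bool :=
  fun z => τ (ptK d m q z) (ptA d m q hq z)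

lemma Φmem (σ : (Fin d → ZMod (m * q)) → Bool) (hσ : σ ∈ fiber d m q η) :
    Φmap d m q σ ∈ Fintype.piFinset (fun i => cellG d q (η i)) := by
  rw [Fintype.mem_piFinset]
  intro i
  simp only [cellG, Finset.mem_filter, Finset.mem_univ, true_and, Φmap]
  have := (Finset.mem_filter.mp hσ).2
  exact congrFun this i

lemma Ψmem (τ : (Fin d → ZMod m) → (Fin d → Fin q) → Bool)
    (hτ : τ ∈ Fintype.piFinset (fun i => cellG d q (η i))) :
    Ψmap d m q hq τ ∈ fiber d m q η := by
  rw [Fintype.mem_piFinset] at hτ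
  simp only [fiber, Finset.mem_filter, Finset.mem_univ, true_and]
  funext i
  have hi := hτ i
  simp only [cellG, Finset.mem_filter, Finset.mem_univ, true_and] at hi
  rw [← hi]
  simp only [blockF, Ψmap, ptK_cellPoint d m q hq, ptA_cellPoint d m q hq]

lemma ΨΦ (σ : (Fin d → ZMod (m * q)) → Bool) : Ψmap d m q hq (Φmap d m q σ) = σ := by
  funext z
  simp only [Ψmap, Φmap, cellPoint_pt d m q hq]

lemma ΦΨ (τ : (Fin d → ZMod m) → (Fin d → Fin q) → Bool) :
    Φmap d m q (Ψmap d m q hq τ) = τ := by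
  funext i a
  simp only [Ψmap, Φmap, ptK_cellPoint d m q hq, ptA_cellPoint d m q hq]

lemma fiber_card (hq : 0 < q) :
    ((fiber d m q η).card : ℝ) = ∏ i : Fin d → ZMod m, ((cellG d q (η i)).card : ℝ) := by
  have := Finset.card_nbij' (Φmap d m q) (Ψmap d m q hq)
    (Φmem d m q η) (Ψmem d m q hq η) (fun σ _ => ΨΦ d m q hq σ) (fun τ _ => ΦΨ d m q hq τ)
  rw [this, Fintype.card_piFinset]
  push_cast
  rfl

/-- factorization of a fiber sum of a two-cell observable -/
lemma fiber_sum_factor (hq : 0 < q) {k l : Fin d → ZMod m} (hkl : k ≠ l)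
    (u v : ((Fin d → Fin q) → Bool) → ℝ) :
    ∑ σ ∈ fiber d m q η,
        u (fun a => σ (cellPoint d m q k a)) * v (fun a => σ (cellPoint d m q l a))
      = (∏ i ∈ (Finset.univ.erase k).erase l, ((cellG d q (η i)).card : ℝ))
          * (∑ f ∈ cellG d q (η k), u f) * (∑ g ∈ cellG d q (η l), v g) := by
  have step1 : ∑ σ ∈ fiber d m q η,
        u (fun a => σ (cellPoint d m q k a)) * v (fun a => σ (cellPoint d m q l a))
      = ∑ τ ∈ Fintype.piFinset (fun i => cellG d q (η i)), u (τ k) * v (τ l) := by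
    apply Finset.sum_nbij' (Φmap d m q) (Ψmap d m q hq)
      (Φmem d m q η) (Ψmem d m q hq η) (fun σ _ => ΨΦ d m q hq σ) (fun τ _ => ΦΨ d m q hq τ)
    intro σ _
    rfl
  rw [step1]
  -- now use prod_univ_sum with indicator-style factors
  set g : (Fin d → ZMod m) → ((Fin d → Fin q) → Bool) → ℝ :=
    fun i x => if i = k then u x else if i = l then v x else 1 with hg
  have hprod : ∀ τ : (Fin d → ZMod m) → (Fin d → Fin q) → Bool,
      ∏ i : Fin d → ZMod m, g i (τ i) = u (τ k) * v (τ l) := by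
    intro τ
    rw [← Finset.mul_prod_erase Finset.univ _ (Finset.mem_univ k),
      ← Finset.mul_prod_erase _ _ (Finset.mem_erase.mpr ⟨Ne.symm hkl, Finset.mem_univ l⟩)]
    have e1 : g k (τ k) = u (τ k) := by simp [hg]
    have e2 : g l (τ l) = v (τ l) := by simp [hg, hkl.symm]
    have e3 : ∏ i ∈ (Finset.univ.erase k).erase l, g i (τ i) = 1 :=
      Finset.prod_eq_one (fun i hi => by
        simp [hg, Finset.ne_of_mem_erase hi,
          Finset.ne_of_mem_erase (Finset.mem_of_mem_erase hi)])
    rw [e1, e2, e3, mul_one]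
  rw [Finset.sum_congr rfl (fun τ _ => (hprod τ).symm), ← Finset.prod_univ_sum]
  rw [← Finset.mul_prod_erase Finset.univ _ (Finset.mem_univ k),
    ← Finset.mul_prod_erase _ _ (Finset.mem_erase.mpr ⟨Ne.symm hkl, Finset.mem_univ l⟩)]
  have h1 : ∑ x ∈ cellG d q (η k), g k x = ∑ f ∈ cellG d q (η k), u f := by
    apply Finset.sum_congr rfl; intro x _; simp [hg]
  have h2 : ∑ x ∈ cellG d q (η l), g l x = ∑ f ∈ cellG d q (η l), v f := by
    apply Finset.sum_congr rfl; intro x _; simp [hg, hkl.symm]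
  have h3 : ∀ i ∈ (Finset.univ.erase k).erase l,
      ∑ x ∈ cellG d q (η i), g i x = ((cellG d q (η i)).card : ℝ) := by
    intro i hi
    rw [Finset.sum_congr rfl (fun x _ => ?_), Finset.sum_const, nsmul_eq_mul, mul_one]
    simp only [hg]
    rw [if_neg (Finset.ne_of_mem_erase (Finset.mem_of_mem_erase hi)),
      if_neg (Finset.ne_of_mem_erase hi)]
  rw [h1, h2, Finset.prod_congr rfl h3]
  ring

end factor


/-- **Conditional second moment of the two-cell fluctuation:** with
`S(σ) = Σ_{x∈C_k, y∈C_l} a(x,y) σ(x)σ(y)` and `a(x,y) = J(x−y) − J̄(k,l)`,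
`E[S² | F = η] = jᵏ·E₂(α_l)(1 − E₂(α_k)) + jˡ·E₂(α_k)(1 − E₂(α_l))
               + j¹·(1 − E₂(α_k))(1 − E₂(α_l))`. -/
theorem fluctuation_second_moment
    (d m q : ℕ) [NeZero m] [NeZero (m * q)] (hd : 1 ≤ d) (hm : 1 ≤ m)
    (hQ : 2 ≤ q ^ d)
    (J : (Fin d → ZMod (m * q)) → ℝ) (hJeven : ∀ x, J (-x) = J x) (hJ0 : J 0 = 0)
    (k l : Fin d → ZMod m) (hkl : k ≠ l)
    (η : (Fin d → ZMod m) → ℤ) (hη : (fiber d m q η).Nonempty)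
    (αk αl : ℕ)
    (hαk : η k + (q ^ d : ℤ) = 2 * (αk : ℤ)) (hαl : η l + (q ^ d : ℤ) = 2 * (αl : ℤ))
    (E₂ : ℕ → ℝ)
    (hE₂ : ∀ a : ℕ, E₂ a =
      ((a : ℝ) * ((a : ℝ) - 1) - 2 * (a : ℝ) * ((q : ℝ) ^ d - (a : ℝ))
          + ((q : ℝ) ^ d - (a : ℝ)) * (((q : ℝ) ^ d - (a : ℝ)) - 1))
        / ((q : ℝ) ^ d * ((q : ℝ) ^ d - 1)))
    (aJ : (Fin d → Fin q) → (Fin d → Fin q) → ℝ)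
    (haJ : ∀ a b, aJ a b =
      J (cellPoint d m q k a - cellPoint d m q l b)
        - (∑ a' : Fin d → Fin q, ∑ b' : Fin d → Fin q,
            J (cellPoint d m q k a' - cellPoint d m q l b')) / ((q : ℝ) ^ d) ^ 2)
    (j₁ jk jl : ℝ)
    (hj₁ : j₁ = ∑ a : Fin d → Fin q, ∑ b : Fin d → Fin q, (aJ a b) ^ 2)
    (hjk : jk = ∑ a : Fin d → Fin q, ∑ b : Fin d → Fin q, ∑ b' : Fin d → Fin q,
        aJ a b * aJ a b')
    (hjl : jl = ∑ b : Fin d → Fin q, ∑ a : Fin d → Fin q, ∑ a' : Fin d → Fin q,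
        aJ a b * aJ a' b)
    (S : ((Fin d → ZMod (m * q)) → Bool) → ℝ)
    (hS : ∀ σ, S σ = ∑ a : Fin d → Fin q, ∑ b : Fin d → Fin q,
        aJ a b * (spin (σ (cellPoint d m q k a)) * spin (σ (cellPoint d m q l b)))) :
    (∑ σ ∈ fiber d m q η, (S σ) ^ 2) / ((fiber d m q η).card : ℝ)
      = jk * E₂ αl * (1 - E₂ αk) + jl * E₂ αk * (1 - E₂ αl)
        + j₁ * (1 - E₂ αk) * (1 - E₂ αl) := by
  classical
  have hq : 0 < q := by
    rcases Nat.eq_zero_or_pos q with h | h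
    · subst h; rw [Nat.zero_pow (by omega : 0 < d)] at hQ; omega
    · exact h
  set Qr : ℝ := (q : ℝ) ^ d with hQrdef
  have hQr2 : (2 : ℝ) ≤ Qr := by
    rw [hQrdef]; exact_mod_cast hQ
  have hQrne : Qr ≠ 0 := by nlinarith
  set Ek : ℝ := (((η k : ℝ)) ^ 2 - Qr) / (Qr * (Qr - 1)) with hEkdef
  set El : ℝ := (((η l : ℝ)) ^ 2 - Qr) / (Qr * (Qr - 1)) with hEldef
  have hηkr : (η k : ℝ) = 2 * (αk : ℝ) - Qr := by
    have h2 : ((η k : ℝ)) + ((q : ℝ)) ^ d = 2 * (αk : ℝ) := by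
      exact_mod_cast congrArg (fun z : ℤ => (z : ℝ)) hαk
    rw [hQrdef]; linarith
  have hηlr : (η l : ℝ) = 2 * (αl : ℝ) - Qr := by
    have h2 : ((η l : ℝ)) + ((q : ℝ)) ^ d = 2 * (αl : ℝ) := by
      exact_mod_cast congrArg (fun z : ℤ => (z : ℝ)) hαl
    rw [hQrdef]; linarith
  have hEk : E₂ αk = Ek := by
    rw [hE₂ αk, hEkdef]
    congr 1
    rw [hηkr]; ring
  have hEl : E₂ αl = El := by
    rw [hE₂ αl, hEldef]
    congr 1
    rw [hηlr]; ring
  -- total sum of aJ vanishes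
  have hcardA : (Fintype.card (Fin d → Fin q) : ℝ) = Qr := by
    rw [card_cellA]; push_cast; rfl
  have hsum0 : ∑ a : Fin d → Fin q, ∑ b : Fin d → Fin q, aJ a b = 0 := by
    simp only [haJ, Finset.sum_sub_distrib, Finset.sum_const, Finset.card_univ, nsmul_eq_mul]
    rw [hcardA]
    field_simp
    ring
  -- per-cell pair correlations
  set Gk := cellG d q (η k) with hGkdef
  set Gl := cellG d q (η l) with hGldef
  set Nk : ℝ := (Gk.card : ℝ) with hNkdef
  set Nl : ℝ := (Gl.card : ℝ) with hNldef
  have hcellk : ∀ a a' : Fin d → Fin q, ∑ f ∈ Gk, spin (f a) * spin (f a')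
      = Nk * (if a = a' then 1 else Ek) := by
    intro a a'
    by_cases h : a = a'
    · subst h
      rw [if_pos rfl, mul_one, Finset.sum_congr rfl (fun f _ => spin_sq (f a)),
        Finset.sum_const, nsmul_eq_mul, mul_one]
    · rw [if_neg h, hGkdef, cell_corr hQ (η k) h, hEkdef, mul_div_assoc]
  have hcelll : ∀ b b' : Fin d → Fin q, ∑ f ∈ Gl, spin (f b) * spin (f b')
      = Nl * (if b = b' then 1 else El) := by
    intro b b'
    by_cases h : b = b'
    · subst h
      rw [if_pos rfl, mul_one, Finset.sum_congr rfl (fun f _ => spin_sq (f b)),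
        Finset.sum_const, nsmul_eq_mul, mul_one]
    · rw [if_neg h, hGldef, cell_corr hQ (η l) h, hEldef, mul_div_assoc]
  set P : ℝ := ∏ i ∈ (Finset.univ.erase k).erase l, ((cellG d q (η i)).card : ℝ) with hPdef
  -- expand S²
  have hS2 : ∀ σ, S σ ^ 2 = ∑ a : Fin d → Fin q, ∑ a' : Fin d → Fin q,
      ∑ b : Fin d → Fin q, ∑ b' : Fin d → Fin q,
      (aJ a b * aJ a' b') * ((spin (σ (cellPoint d m q k a)) * spin (σ (cellPoint d m q k a')))
        * (spin (σ (cellPoint d m q l b)) * spin (σ (cellPoint d m q l b')))) := by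
    intro σ
    rw [hS σ, sq, Finset.sum_mul_sum]
    refine Finset.sum_congr rfl fun a _ => Finset.sum_congr rfl fun a' _ => ?_
    rw [Finset.sum_mul_sum]
    refine Finset.sum_congr rfl fun b _ => Finset.sum_congr rfl fun b' _ => ?_
    ring
  -- factorize the fiber sum
  have hfib : ∀ a a' b b' : Fin d → Fin q,
      ∑ σ ∈ fiber d m q η, (spin (σ (cellPoint d m q k a)) * spin (σ (cellPoint d m q k a')))
        * (spin (σ (cellPoint d m q l b)) * spin (σ (cellPoint d m q l b')))
      = P * (Nk * (if a = a' then 1 else Ek)) * (Nl * (if b = b' then 1 else El)) := by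
    intro a a' b b'
    rw [fiber_sum_factor d m q η hq hkl (fun f => spin (f a) * spin (f a'))
      (fun g => spin (g b) * spin (g b')), ← hGkdef, ← hGldef, hcellk a a', hcelll b b', ← hPdef]
  -- the quadruple sum
  set X : ℝ := ∑ a : Fin d → Fin q, ∑ a' : Fin d → Fin q, ∑ b : Fin d → Fin q,
      ∑ b' : Fin d → Fin q, (aJ a b * aJ a' b')
        * ((if a = a' then 1 else Ek) * (if b = b' then 1 else El)) with hXdef
  have htot : ∑ σ ∈ fiber d m q η, S σ ^ 2 = (P * Nk * Nl) * X := by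
    rw [Finset.sum_congr rfl (fun σ _ => hS2 σ), Finset.sum_comm]
    rw [Finset.sum_congr rfl (fun a _ => Finset.sum_comm)]
    rw [Finset.sum_congr rfl (fun a _ => Finset.sum_congr rfl (fun a' _ => Finset.sum_comm))]
    rw [Finset.sum_congr rfl (fun a _ => Finset.sum_congr rfl (fun a' _ =>
      Finset.sum_congr rfl (fun b _ => Finset.sum_comm)))]
    have hinner : ∀ a a' b b' : Fin d → Fin q,
        ∑ σ ∈ fiber d m q η, (aJ a b * aJ a' b')
          * ((spin (σ (cellPoint d m q k a)) * spin (σ (cellPoint d m q k a')))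
            * (spin (σ (cellPoint d m q l b)) * spin (σ (cellPoint d m q l b'))))
        = (P * Nk * Nl) * ((aJ a b * aJ a' b')
            * ((if a = a' then 1 else Ek) * (if b = b' then 1 else El))) := by
      intro a a' b b'
      rw [← Finset.mul_sum, hfib a a' b b']
      ring
    rw [Finset.sum_congr rfl (fun a _ => Finset.sum_congr rfl (fun a' _ =>
      Finset.sum_congr rfl (fun b _ => Finset.sum_congr rfl (fun b' _ => hinner a a' b b'))))]
    simp only [← Finset.mul_sum]
    rfl
  -- compute X
  have hterm : ∀ a a' b b' : Fin d → Fin q,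
      (aJ a b * aJ a' b') * ((if a = a' then 1 else Ek) * (if b = b' then 1 else El))
      = Ek * El * (aJ a b * aJ a' b')
        + El * (1 - Ek) * (if a = a' then aJ a b * aJ a' b' else 0)
        + Ek * (1 - El) * (if b = b' then aJ a b * aJ a' b' else 0)
        + (1 - Ek) * (1 - El)
            * (if a = a' then (if b = b' then aJ a b * aJ a' b' else 0) else 0) := by
    intro a a' b b'
    by_cases h1 : a = a' <;> by_cases h2 : b = b' <;> simp [h1, h2] <;> ring
  have hS1 : ∑ a : Fin d → Fin q, ∑ a' : Fin d → Fin q, ∑ b : Fin d → Fin q,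
      ∑ b' : Fin d → Fin q, aJ a b * aJ a' b' = 0 := by
    have h1 : ∀ a a' : Fin d → Fin q, ∑ b : Fin d → Fin q, ∑ b' : Fin d → Fin q,
        aJ a b * aJ a' b' = (∑ b : Fin d → Fin q, aJ a b) * (∑ b' : Fin d → Fin q, aJ a' b') :=
      fun a a' => (Finset.sum_mul_sum _ _ _ _).symm
    rw [Finset.sum_congr rfl (fun a _ => Finset.sum_congr rfl (fun a' _ => h1 a a')),
      ← Finset.sum_mul_sum, hsum0, mul_zero]
  have hS2' : ∑ a : Fin d → Fin q, ∑ a' : Fin d → Fin q, ∑ b : Fin d → Fin q,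
      ∑ b' : Fin d → Fin q, (if a = a' then aJ a b * aJ a' b' else 0) = jk := by
    have h1 : ∀ a a' : Fin d → Fin q, ∑ b : Fin d → Fin q, ∑ b' : Fin d → Fin q,
        (if a = a' then aJ a b * aJ a' b' else 0)
        = if a = a' then ∑ b : Fin d → Fin q, ∑ b' : Fin d → Fin q, aJ a b * aJ a' b' else 0 := by
      intro a a'; by_cases h : a = a' <;> simp [h]
    rw [Finset.sum_congr rfl (fun a _ => Finset.sum_congr rfl (fun a' _ => h1 a a')), hjk]
    refine Finset.sum_congr rfl fun a _ => ?_
    rw [Finset.sum_ite_eq Finset.univ a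
      (fun a' => ∑ b : Fin d → Fin q, ∑ b' : Fin d → Fin q, aJ a b * aJ a' b'), if_pos (Finset.mem_univ a)]
  have hS3 : ∑ a : Fin d → Fin q, ∑ a' : Fin d → Fin q, ∑ b : Fin d → Fin q,
      ∑ b' : Fin d → Fin q, (if b = b' then aJ a b * aJ a' b' else 0) = jl := by
    have h1 : ∀ a a' b : Fin d → Fin q, ∑ b' : Fin d → Fin q,
        (if b = b' then aJ a b * aJ a' b' else 0) = aJ a b * aJ a' b := by
      intro a a' b
      rw [Finset.sum_ite_eq Finset.univ b (fun b' => aJ a b * aJ a' b'), if_pos (Finset.mem_univ b)]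
    rw [Finset.sum_congr rfl (fun a _ => Finset.sum_congr rfl (fun a' _ =>
      Finset.sum_congr rfl (fun b _ => h1 a a' b))), hjl]
    rw [Finset.sum_congr rfl (fun a _ => Finset.sum_comm), Finset.sum_comm]
  have hS4 : ∑ a : Fin d → Fin q, ∑ a' : Fin d → Fin q, ∑ b : Fin d → Fin q,
      ∑ b' : Fin d → Fin q, (if a = a' then (if b = b' then aJ a b * aJ a' b' else 0) else 0)
      = j₁ := by
    have h1 : ∀ a a' b : Fin d → Fin q, ∑ b' : Fin d → Fin q,
        (if a = a' then (if b = b' then aJ a b * aJ a' b' else 0) else 0)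
        = if a = a' then aJ a b * aJ a' b else 0 := by
      intro a a' b
      by_cases h : a = a'
      · simp only [if_pos h]
        rw [Finset.sum_ite_eq Finset.univ b (fun b' => aJ a b * aJ a' b'), if_pos (Finset.mem_univ b)]
      · simp [h]
    have h2 : ∀ a a' : Fin d → Fin q, ∑ b : Fin d → Fin q,
        (if a = a' then aJ a b * aJ a' b else 0)
        = if a = a' then ∑ b : Fin d → Fin q, aJ a b * aJ a' b else 0 := by
      intro a a'; by_cases h : a = a' <;> simp [h]
    rw [Finset.sum_congr rfl (fun a _ => Finset.sum_congr rfl (fun a' _ =>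
      (Finset.sum_congr rfl (fun b _ => h1 a a' b)).trans (h2 a a'))), hj₁]
    refine Finset.sum_congr rfl fun a _ => ?_
    rw [Finset.sum_ite_eq Finset.univ a (fun a' => ∑ b : Fin d → Fin q, aJ a b * aJ a' b),
      if_pos (Finset.mem_univ a)]
    exact Finset.sum_congr rfl fun b _ => (sq (aJ a b)).symm
  have pull : ∀ (c : ℝ) (f : (Fin d → Fin q) → (Fin d → Fin q) → (Fin d → Fin q) → (Fin d → Fin q) → ℝ),
      ∑ a : Fin d → Fin q, ∑ a' : Fin d → Fin q, ∑ b : Fin d → Fin q, ∑ b' : Fin d → Fin q,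
        c * f a a' b b'
      = c * ∑ a : Fin d → Fin q, ∑ a' : Fin d → Fin q, ∑ b : Fin d → Fin q,
          ∑ b' : Fin d → Fin q, f a a' b b' := by
    intro c f
    symm
    rw [Finset.mul_sum]
    refine Finset.sum_congr rfl fun a _ => ?_
    rw [Finset.mul_sum]
    refine Finset.sum_congr rfl fun a' _ => ?_
    rw [Finset.mul_sum]
    refine Finset.sum_congr rfl fun b _ => ?_
    rw [Finset.mul_sum]
  have hX : X = jk * El * (1 - Ek) + jl * Ek * (1 - El) + j₁ * (1 - Ek) * (1 - El) := by
    rw [hXdef]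
    rw [Finset.sum_congr rfl (fun a _ => Finset.sum_congr rfl (fun a' _ =>
      Finset.sum_congr rfl (fun b _ => Finset.sum_congr rfl (fun b' _ => hterm a a' b b'))))]
    simp only [Finset.sum_add_distrib]
    rw [pull (Ek * El) (fun a a' b b' => aJ a b * aJ a' b'),
      pull (El * (1 - Ek)) (fun a a' b b' => if a = a' then aJ a b * aJ a' b' else 0),
      pull (Ek * (1 - El)) (fun a a' b b' => if b = b' then aJ a b * aJ a' b' else 0),
      pull ((1 - Ek) * (1 - El))
        (fun a a' b b' => if a = a' then (if b = b' then aJ a b * aJ a' b' else 0) else 0),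
      hS1, hS2', hS3, hS4]
    ring
  -- fiber cardinality
  have hC : ((fiber d m q η).card : ℝ) = P * Nk * Nl := by
    rw [fiber_card d m q η hq,
      ← Finset.mul_prod_erase Finset.univ _ (Finset.mem_univ k),
      ← Finset.mul_prod_erase _ _ (Finset.mem_erase.mpr ⟨Ne.symm hkl, Finset.mem_univ l⟩),
      ← hGkdef, ← hGldef, ← hNkdef, ← hNldef, ← hPdef]
    ring
  have hCne : ((fiber d m q η).card : ℝ) ≠ 0 :=
    Nat.cast_ne_zero.mpr (Finset.card_pos.mpr hη).ne'
  rw [htot, ← hC, mul_div_cancel_left₀ _ hCne, hX, hEk, hEl]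
end
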